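/- arXiv:2302.06385 — 11 statements merged into one kernel-verified Lean document; each statement's English description precedes it below -/
import Mathlib

section
/- With the SBP setup below, the operator D_m = (1/2) Σ_{i=1}^p ( diag(Ẋ_i) D_i + D_i diag(Ẋ_i) ) satisfies the combined summation-by-parts property diag(𝒫) D_m + D_mᵀ diag(𝒫) = Eᵀ diag(P) diag(N·Ẋ) E, where (N·Ẋ) k = Σ_{i=1}^p N_i k · Ẋ_i(σ k). Equivalently, for all vectors Φ, Ψ ∈ ℝ^{nV}: Φᵀ diag(𝒫) (D_m Ψ) = −(D_m Φ)ᵀ diag(𝒫) Ψ + (EΦ)ᵀ diag(P) diag(N·Ẋ) (EΨ). -/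
open Matrix

/-- The combined summation-by-parts property (3.13)–(3.14) of the discrete
skew-symmetric operator `D_m = (1/2) Σᵢ (diag(Ẋᵢ) Dᵢ + Dᵢ diag(Ẋᵢ))` built from
SBP partial derivative operators `Dᵢ = diag(𝒫)⁻¹ Qᵢ`. -/
theorem stmt2 (nV nS p : ℕ) (hnV : 0 < nV) (hnS : 0 < nS) (hp : 0 < p)
    (σ : Fin nS → Fin nV) (hσ : Function.Injective σ)
    (E : Matrix (Fin nS) (Fin nV) ℝ)
    (hE : ∀ (k : Fin nS) (j : Fin nV), E k j = if j = σ k then 1 else 0)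
    (Pvol : Fin nV → ℝ) (hPvol : ∀ i, 0 < Pvol i)
    (Psurf : Fin nS → ℝ) (hPsurf : ∀ k, 0 < Psurf k)
    (N : Fin p → Fin nS → ℝ)
    (Q : Fin p → Matrix (Fin nV) (Fin nV) ℝ)
    (hQ : ∀ i, Q i + (Q i)ᵀ = Eᵀ * Matrix.diagonal Psurf * Matrix.diagonal (N i) * E)
    (D : Fin p → Matrix (Fin nV) (Fin nV) ℝ)
    (hD : ∀ i, D i = (Matrix.diagonal Pvol)⁻¹ * Q i)
    (Xd : Fin p → Fin nV → ℝ)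
    (Dm : Matrix (Fin nV) (Fin nV) ℝ)
    (hDm : Dm = (1 / 2 : ℝ) •
      ∑ i, (Matrix.diagonal (Xd i) * D i + D i * Matrix.diagonal (Xd i))) :
    Matrix.diagonal Pvol * Dm + Dmᵀ * Matrix.diagonal Pvol
        = Eᵀ * Matrix.diagonal Psurf
            * Matrix.diagonal (fun k => ∑ i, N i k * Xd i (σ k)) * E ∧
    ∀ Φ Ψ : Fin nV → ℝ,
      Φ ⬝ᵥ (Matrix.diagonal Pvol *ᵥ (Dm *ᵥ Ψ))
        = -((Dm *ᵥ Φ) ⬝ᵥ (Matrix.diagonal Pvol *ᵥ Ψ))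
          + (E *ᵥ Φ) ⬝ᵥ (Matrix.diagonal Psurf *ᵥ
              (Matrix.diagonal (fun k => ∑ i, N i k * Xd i (σ k)) *ᵥ (E *ᵥ Ψ))) := by
  classical
  -- helper: equal diagonal functions give equal diagonal matrices
  have hdcongr : ∀ f g : Fin nS → ℝ, (∀ k, f k = g k) →
      (Matrix.diagonal f : Matrix (Fin nS) (Fin nS) ℝ) = Matrix.diagonal g :=
    fun f g h => congrArg Matrix.diagonal (funext h)
  have hdcongrV : ∀ f g : Fin nV → ℝ, (∀ k, f k = g k) →
      (Matrix.diagonal f : Matrix (Fin nV) (Fin nV) ℝ) = Matrix.diagonal g :=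
    fun f g h => congrArg Matrix.diagonal (funext h)
  -- invertibility of diag(Pvol)
  have hdet : IsUnit (Matrix.diagonal Pvol).det := by
    rw [Matrix.det_diagonal]
    exact isUnit_iff_ne_zero.mpr
      (Finset.prod_ne_zero_iff.mpr fun i _ => (hPvol i).ne')
  have hPD : ∀ i, Matrix.diagonal Pvol * D i = Q i := by
    intro i
    rw [hD, ← Matrix.mul_assoc, Matrix.mul_nonsing_inv _ hdet, Matrix.one_mul]
  have hDP : ∀ i, (D i)ᵀ * Matrix.diagonal Pvol = (Q i)ᵀ := by
    intro i
    have := congrArg Matrix.transpose (hPD i)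
    rwa [Matrix.transpose_mul, Matrix.diagonal_transpose] at this
  -- commuting diagonal matrices past E
  have hEd : ∀ v : Fin nV → ℝ,
      Matrix.diagonal v * Eᵀ = Eᵀ * Matrix.diagonal (fun k => v (σ k)) := by
    intro v
    ext j k
    simp only [Matrix.mul_apply, Matrix.diagonal_apply, Matrix.transpose_apply, hE]
    by_cases h : j = σ k <;>
      simp [h, Finset.sum_ite_eq, Finset.sum_ite_eq', eq_comm]
  have hdE : ∀ v : Fin nV → ℝ,
      E * Matrix.diagonal v = Matrix.diagonal (fun k => v (σ k)) * E := by
    intro v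
    have := congrArg Matrix.transpose (hEd v)
    rw [Matrix.transpose_mul, Matrix.transpose_mul, Matrix.diagonal_transpose,
      Matrix.diagonal_transpose, Matrix.transpose_transpose] at this
    exact this
  -- normal form lemmas
  have hnorm : ∀ f : Fin nS → ℝ,
      Eᵀ * Matrix.diagonal Psurf * Matrix.diagonal f * E
        = Eᵀ * Matrix.diagonal (fun k => Psurf k * f k) * E := by
    intro f
    rw [Matrix.mul_assoc Eᵀ, Matrix.diagonal_mul_diagonal]
  have hL : ∀ (v : Fin nV → ℝ) (w : Fin nS → ℝ),
      Matrix.diagonal v * (Eᵀ * Matrix.diagonal w * E)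
        = Eᵀ * Matrix.diagonal (fun k => v (σ k) * w k) * E := by
    intro v w
    rw [← Matrix.mul_assoc, ← Matrix.mul_assoc, hEd, Matrix.mul_assoc Eᵀ,
      Matrix.diagonal_mul_diagonal]
  have hR : ∀ (v : Fin nV → ℝ) (w : Fin nS → ℝ),
      (Eᵀ * Matrix.diagonal w * E) * Matrix.diagonal v
        = Eᵀ * Matrix.diagonal (fun k => w k * v (σ k)) * E := by
    intro v w
    rw [Matrix.mul_assoc, hdE, ← Matrix.mul_assoc, Matrix.mul_assoc Eᵀ,
      Matrix.diagonal_mul_diagonal]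
  -- key per-index identity
  have key : ∀ i : Fin p,
      Matrix.diagonal Pvol * (Matrix.diagonal (Xd i) * D i + D i * Matrix.diagonal (Xd i))
        + (Matrix.diagonal (Xd i) * D i + D i * Matrix.diagonal (Xd i))ᵀ * Matrix.diagonal Pvol
      = Eᵀ * Matrix.diagonal (fun k => 2 * (Psurf k * (N i k * Xd i (σ k)))) * E := by
    intro i
    have hG : Q i + (Q i)ᵀ = Eᵀ * Matrix.diagonal (fun k => Psurf k * N i k) * E := by
      rw [hQ i, hnorm]
    have h1 : Matrix.diagonal Pvol * (Matrix.diagonal (Xd i) * D i)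
        = Matrix.diagonal (Xd i) * Q i := by
      rw [← Matrix.mul_assoc, Matrix.diagonal_mul_diagonal, ← hPD i, ← Matrix.mul_assoc,
        Matrix.diagonal_mul_diagonal, hdcongrV _ _ (fun k => mul_comm (Pvol k) (Xd i k))]
    have h2 : Matrix.diagonal Pvol * (D i * Matrix.diagonal (Xd i))
        = Q i * Matrix.diagonal (Xd i) := by
      rw [← Matrix.mul_assoc, hPD i]
    have h3 : (Matrix.diagonal (Xd i) * D i + D i * Matrix.diagonal (Xd i))ᵀ
          * Matrix.diagonal Pvol
        = (Q i)ᵀ * Matrix.diagonal (Xd i) + Matrix.diagonal (Xd i) * (Q i)ᵀ := by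
      rw [Matrix.transpose_add, Matrix.transpose_mul, Matrix.transpose_mul,
        Matrix.diagonal_transpose, add_mul]
      congr 1
      · rw [Matrix.mul_assoc, Matrix.diagonal_mul_diagonal,
          hdcongrV _ _ (fun k => mul_comm (Xd i k) (Pvol k)),
          ← Matrix.diagonal_mul_diagonal, ← Matrix.mul_assoc, hDP i]
      · rw [Matrix.mul_assoc, hDP i]
    rw [mul_add, h1, h2, h3]
    have step : Matrix.diagonal (Xd i) * Q i + Q i * Matrix.diagonal (Xd i)
          + ((Q i)ᵀ * Matrix.diagonal (Xd i) + Matrix.diagonal (Xd i) * (Q i)ᵀ)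
        = Matrix.diagonal (Xd i) * (Q i + (Q i)ᵀ)
          + (Q i + (Q i)ᵀ) * Matrix.diagonal (Xd i) := by
      rw [mul_add, add_mul]
      abel
    rw [step, hG, hL, hR, ← Matrix.add_mul, ← Matrix.mul_add, Matrix.diagonal_add]
    rw [hdcongr _ _ (fun k => by ring :
      ∀ k, Xd i (σ k) * (Psurf k * N i k) + Psurf k * N i k * Xd i (σ k)
        = 2 * (Psurf k * (N i k * Xd i (σ k))))]
  -- first statement
  have main : Matrix.diagonal Pvol * Dm + Dmᵀ * Matrix.diagonal Pvol
      = Eᵀ * Matrix.diagonal Psurf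
          * Matrix.diagonal (fun k => ∑ i, N i k * Xd i (σ k)) * E := by
    rw [hDm, Matrix.transpose_smul, Matrix.transpose_sum, Matrix.mul_smul, Matrix.smul_mul,
      ← smul_add, Matrix.mul_sum, Matrix.sum_mul, ← Finset.sum_add_distrib,
      Finset.sum_congr rfl (fun i _ => key i), hnorm]
    have hdsum : (∑ i : Fin p,
          (Matrix.diagonal (fun k => 2 * (Psurf k * (N i k * Xd i (σ k))))
            : Matrix (Fin nS) (Fin nS) ℝ))
        = Matrix.diagonal (fun k => ∑ i : Fin p, 2 * (Psurf k * (N i k * Xd i (σ k)))) := by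
      ext j l
      by_cases h : j = l <;>
        simp [Matrix.sum_apply, Matrix.diagonal_apply, h]
    have hhalf : (1 / 2 : ℝ) • (Matrix.diagonal
        (fun k => ∑ i : Fin p, 2 * (Psurf k * (N i k * Xd i (σ k))))
          : Matrix (Fin nS) (Fin nS) ℝ)
        = Matrix.diagonal (fun k =>
            (1 / 2 : ℝ) * ∑ i : Fin p, 2 * (Psurf k * (N i k * Xd i (σ k)))) := by
      ext j l
      by_cases h : j = l <;> simp [Matrix.diagonal_apply, h]
    rw [← Matrix.sum_mul, ← Matrix.mul_sum, hdsum, ← Matrix.smul_mul, ← Matrix.mul_smul,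
      hhalf]
    rw [hdcongr _ _ (fun k => by
        rw [Finset.mul_sum, Finset.mul_sum]
        exact Finset.sum_congr rfl (fun i _ => by ring) :
      ∀ k, (1 / 2 : ℝ) * (∑ i : Fin p, 2 * (Psurf k * (N i k * Xd i (σ k))))
        = Psurf k * ∑ i : Fin p, N i k * Xd i (σ k))]
  refine ⟨main, fun Φ Ψ => ?_⟩
  have hM : Matrix.diagonal Pvol * Dm
      = Eᵀ * Matrix.diagonal Psurf
          * Matrix.diagonal (fun k => ∑ i, N i k * Xd i (σ k)) * E
        - Dmᵀ * Matrix.diagonal Pvol := by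
    rw [← main]
    abel
  rw [Matrix.mulVec_mulVec, hM, Matrix.sub_mulVec, dotProduct_sub, sub_eq_add_neg,
    add_comm]
  congr 1
  · rw [← Matrix.mulVec_mulVec, Matrix.dotProduct_mulVec Φ, Matrix.vecMul_transpose]
  · rw [Matrix.mul_assoc, Matrix.mul_assoc, ← Matrix.mulVec_mulVec,
      Matrix.dotProduct_mulVec Φ, Matrix.vecMul_transpose, ← Matrix.mulVec_mulVec,
      ← Matrix.mulVec_mulVec]
end

section
/- Let nV, nS be positive integers, σ : Fin nS → Fin nV injective with restriction matrix E (E k j = 1 if j = σ k, else 0), P : Fin nS → ℝ strictly positive surface weights, and P̂ : Fin nV → ℝ strictly positive constant reference weights. Let g : ℝ → (Fin nV → ℝ) and 𝒥 : ℝ → (Fin nV → ℝ) be differentiable with 𝒥(t) i > 0 and d/dt 𝒥(t) i = g(t) i · 𝒥(t) i for all t, i; set 𝒫(t) = 𝒥(t) ⊙ P̂ (componentwise). Let D_m : ℝ → Matrix (Fin nV) (Fin nV) ℝ and W : ℝ → (Fin nS → ℝ) satisfy, for every t, the SBP property diag(𝒫(t)) D_m(t) + D_m(t)ᵀ diag(𝒫(t))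 = Eᵀ diag(P) diag(W(t)) E. Let Φ, Ψ : ℝ → (Fin nV → ℝ) be differentiable, and define Φ_t(t) := Φ'(t) − D_m(t)Φ(t) + (1/2) g(t) ⊙ Φ(t) and Ψ_t analogously. Then for all t: d/dt [ Φ(t)ᵀ diag(𝒫(t)) Ψ(t) ] = Φ_t(t)ᵀ diag(𝒫(t)) Ψ(t) + Φ(t)ᵀ diag(𝒫(t)) Ψ_t(t) + (EΦ(t))ᵀ diag(P) diag(W(t)) (EΨ(t)). -/
open Matrix

/-- The semi-discrete Reynolds transport theorem, equation (3.15) of the paper. -/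
theorem stmt4 (nV nS : ℕ) (hnV : 0 < nV) (hnS : 0 < nS)
    (σ : Fin nS → Fin nV) (hσ : Function.Injective σ)
    (E : Matrix (Fin nS) (Fin nV) ℝ)
    (hE : ∀ (k : Fin nS) (j : Fin nV), E k j = if j = σ k then 1 else 0)
    (Psurf : Fin nS → ℝ) (hPsurf : ∀ k, 0 < Psurf k)
    (Pref : Fin nV → ℝ) (hPref : ∀ i, 0 < Pref i)
    (g J : ℝ → Fin nV → ℝ) (hJpos : ∀ (t : ℝ) (i : Fin nV), 0 < J t i)
    (hJ : ∀ (t : ℝ) (i : Fin nV), HasDerivAt (fun s => J s i) (g t i * J t i) t)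
    (Pvol : ℝ → Fin nV → ℝ) (hPvol : ∀ t : ℝ, Pvol t = J t * Pref)
    (Dm : ℝ → Matrix (Fin nV) (Fin nV) ℝ) (W : ℝ → Fin nS → ℝ)
    (hSBP : ∀ t : ℝ, Matrix.diagonal (Pvol t) * Dm t + (Dm t)ᵀ * Matrix.diagonal (Pvol t)
      = Eᵀ * Matrix.diagonal Psurf * Matrix.diagonal (W t) * E)
    (Φ Φ' Ψ Ψ' : ℝ → Fin nV → ℝ)
    (hΦ : ∀ t : ℝ, HasDerivAt Φ (Φ' t) t) (hΨ : ∀ t : ℝ, HasDerivAt Ψ (Ψ' t) t)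
    (Φt Ψt : ℝ → Fin nV → ℝ)
    (hΦt : ∀ t : ℝ, Φt t = Φ' t - Dm t *ᵥ Φ t + (1 / 2 : ℝ) • (g t * Φ t))
    (hΨt : ∀ t : ℝ, Ψt t = Ψ' t - Dm t *ᵥ Ψ t + (1 / 2 : ℝ) • (g t * Ψ t)) :
    ∀ t : ℝ, HasDerivAt (fun s => Φ s ⬝ᵥ (Matrix.diagonal (Pvol s) *ᵥ Ψ s))
      (Φt t ⬝ᵥ (Matrix.diagonal (Pvol t) *ᵥ Ψ t)
        + Φ t ⬝ᵥ (Matrix.diagonal (Pvol t) *ᵥ Ψt t)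
        + (E *ᵥ Φ t) ⬝ᵥ (Matrix.diagonal Psurf *ᵥ (Matrix.diagonal (W t) *ᵥ (E *ᵥ Ψ t)))) t := by
  intro t
  have hΦi : ∀ i, HasDerivAt (fun s => Φ s i) (Φ' t i) t := fun i =>
    (hasDerivAt_pi.mp (hΦ t)) i
  have hΨi : ∀ i, HasDerivAt (fun s => Ψ s i) (Ψ' t i) t := fun i =>
    (hasDerivAt_pi.mp (hΨ t)) i
  -- derivative of the sum function
  have hsum : HasDerivAt (fun s => ∑ i, Φ s i * (J s i * Pref i * Ψ s i))
      (∑ i, (Φ' t i * (J t i * Pref i * Ψ t i)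
        + Φ t i * ((g t i * J t i) * Pref i * Ψ t i + J t i * Pref i * Ψ' t i))) t := by
    apply HasDerivAt.fun_sum
    intro i _
    exact (hΦi i).mul ((((hJ t i).mul_const (Pref i)).mul (hΨi i)).congr_deriv (by ring))
  have hfun : (fun s => Φ s ⬝ᵥ (Matrix.diagonal (Pvol s) *ᵥ Ψ s))
      = fun s => ∑ i, Φ s i * (J s i * Pref i * Ψ s i) := by
    funext s
    simp [dotProduct, Matrix.mulVec_diagonal, hPvol s, Pi.mul_apply, mul_assoc]
  rw [hfun]
  -- SBP key identity
  have key : (Dm t *ᵥ Φ t) ⬝ᵥ (Matrix.diagonal (Pvol t) *ᵥ Ψ t)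
      + Φ t ⬝ᵥ (Matrix.diagonal (Pvol t) *ᵥ (Dm t *ᵥ Ψ t))
      = (E *ᵥ Φ t) ⬝ᵥ (Matrix.diagonal Psurf *ᵥ (Matrix.diagonal (W t) *ᵥ (E *ᵥ Ψ t))) := by
    have h1 : (Dm t *ᵥ Φ t) ⬝ᵥ (Matrix.diagonal (Pvol t) *ᵥ Ψ t)
        = Φ t ⬝ᵥ (((Dm t)ᵀ * Matrix.diagonal (Pvol t)) *ᵥ Ψ t) := by
      rw [Matrix.dotProduct_mulVec, Matrix.dotProduct_mulVec, ← Matrix.vecMul_vecMul]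
      congr 1
      rw [Matrix.vecMul_transpose]
    have h2 : Φ t ⬝ᵥ (Matrix.diagonal (Pvol t) *ᵥ (Dm t *ᵥ Ψ t))
        = Φ t ⬝ᵥ ((Matrix.diagonal (Pvol t) * Dm t) *ᵥ Ψ t) := by
      rw [Matrix.mulVec_mulVec]
    rw [h1, h2, ← dotProduct_add, ← Matrix.add_mulVec, add_comm, hSBP t]
    rw [Matrix.dotProduct_mulVec, ← Matrix.vecMul_vecMul, ← Matrix.vecMul_vecMul,
      ← Matrix.vecMul_vecMul, Matrix.vecMul_transpose, ← Matrix.dotProduct_mulVec]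
    conv_rhs => rw [Matrix.mulVec_mulVec, Matrix.dotProduct_mulVec]
    rw [Matrix.vecMul_vecMul]
  convert hsum using 1
  rw [← key, hΦt, hΨt]
  simp only [dotProduct, Matrix.mulVec_diagonal, hPvol t, Pi.mul_apply, Pi.add_apply,
    Pi.sub_apply, Pi.smul_apply, smul_eq_mul]
  rw [← Finset.sum_add_distrib, ← Finset.sum_add_distrib, ← Finset.sum_add_distrib]
  apply Finset.sum_congr rfl
  intro i _
  ring
end

section
/- Under the setup below, let U : ℝ → (Fin nV → ℝ) be a differentiable solution of the semi-discrete scheme, i.e. U_t(t) = 𝒟(t) U(t) + L(t) ( ℬ(t) U(t) − G(t) ) + F(t), where U_t(t) := U'(t) − D_m(t)U(t) + (1/2) g(t) ⊙ U(t) and L(t) = diag(𝒫(t))⁻¹ δ(t)ᵀ diag(P) is the discrete lifting operator. Then the discrete energy satisfies for all t: d/dt [ U(t)ᵀ diag(𝒫(t)) U(t) ] = 2 U(t)ᵀ diag(𝒫(t)) 𝒟(t) U(t) + 2 (δ(t)U(t))ᵀ diag(P) ( ℬ(t)U(t) − G(t) ) + 2 U(t)ᵀ diag(𝒫(t)) F(t)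 + (EU(t))ᵀ diag(P) diag(W(t)) (EU(t)). -/
open Matrix

/-- The discrete energy identity (3.16) of the paper, for a differentiable solution
of the semi-discrete SBP–SAT scheme with lifting operator
`L(t) = diag(𝒫(t))⁻¹ δ(t)ᵀ diag(P)`. -/
theorem stmt5 (nV nS : ℕ) (hnV : 0 < nV) (hnS : 0 < nS)
    (σ : Fin nS → Fin nV) (hσ : Function.Injective σ)
    (E : Matrix (Fin nS) (Fin nV) ℝ)
    (hE : ∀ (k : Fin nS) (j : Fin nV), E k j = if j = σ k then 1 else 0)
    (Psurf : Fin nS → ℝ) (hPsurf : ∀ k, 0 < Psurf k)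
    (Pref : Fin nV → ℝ) (hPref : ∀ i, 0 < Pref i)
    (g J : ℝ → Fin nV → ℝ) (hJpos : ∀ (t : ℝ) (i : Fin nV), 0 < J t i)
    (hJ : ∀ (t : ℝ) (i : Fin nV), HasDerivAt (fun s => J s i) (g t i * J t i) t)
    (Pvol : ℝ → Fin nV → ℝ) (hPvol : ∀ t : ℝ, Pvol t = J t * Pref)
    (Dm : ℝ → Matrix (Fin nV) (Fin nV) ℝ) (W : ℝ → Fin nS → ℝ)
    (hSBP : ∀ t : ℝ, Matrix.diagonal (Pvol t) * Dm t + (Dm t)ᵀ * Matrix.diagonal (Pvol t)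
      = Eᵀ * Matrix.diagonal Psurf * Matrix.diagonal (W t) * E)
    (𝒟 : ℝ → Matrix (Fin nV) (Fin nV) ℝ)
    (ℬ δ : ℝ → Matrix (Fin nS) (Fin nV) ℝ)
    (G : ℝ → Fin nS → ℝ) (F : ℝ → Fin nV → ℝ)
    (L : ℝ → Matrix (Fin nV) (Fin nS) ℝ)
    (hL : ∀ t : ℝ, L t = (Matrix.diagonal (Pvol t))⁻¹ * (δ t)ᵀ * Matrix.diagonal Psurf)
    (U U' : ℝ → Fin nV → ℝ) (hU : ∀ t : ℝ, HasDerivAt U (U' t) t)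
    (Ut : ℝ → Fin nV → ℝ)
    (hUt : ∀ t : ℝ, Ut t = U' t - Dm t *ᵥ U t + (1 / 2 : ℝ) • (g t * U t))
    (hscheme : ∀ t : ℝ, Ut t = 𝒟 t *ᵥ U t + L t *ᵥ (ℬ t *ᵥ U t - G t) + F t) :
    ∀ t : ℝ, HasDerivAt (fun s => U s ⬝ᵥ (Matrix.diagonal (Pvol s) *ᵥ U s))
      (2 * (U t ⬝ᵥ (Matrix.diagonal (Pvol t) *ᵥ (𝒟 t *ᵥ U t)))
        + 2 * ((δ t *ᵥ U t) ⬝ᵥ (Matrix.diagonal Psurf *ᵥ (ℬ t *ᵥ U t - G t)))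
        + 2 * (U t ⬝ᵥ (Matrix.diagonal (Pvol t) *ᵥ F t))
        + (E *ᵥ U t) ⬝ᵥ (Matrix.diagonal Psurf *ᵥ (Matrix.diagonal (W t) *ᵥ (E *ᵥ U t)))) t := by
  intro t
  have hPvolpos : ∀ s i, 0 < Pvol s i := by
    intro s i; rw [hPvol s]; exact mul_pos (hJpos s i) (hPref i)
  -- coordinatewise derivative of U
  have hUi : ∀ i, HasDerivAt (fun s => U s i) (U' t i) t := fun i => hasDerivAt_pi.mp (hU t) i
  -- the energy as a sum
  have hfun : (fun s => U s ⬝ᵥ (Matrix.diagonal (Pvol s) *ᵥ U s))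
      = fun s => ∑ i, U s i * (J s i * Pref i * U s i) := by
    funext s
    simp [dotProduct, Matrix.mulVec_diagonal, hPvol s, mul_assoc]
  have hderiv : HasDerivAt (fun s => U s ⬝ᵥ (Matrix.diagonal (Pvol s) *ᵥ U s))
      (∑ i, (U' t i * (J t i * Pref i * U t i)
        + U t i * ((g t i * J t i * Pref i) * U t i + J t i * Pref i * U' t i))) t := by
    rw [hfun]
    refine HasDerivAt.fun_sum fun i _ => ?_
    exact (hUi i).mul (((hJ t i).mul_const (Pref i)).mul (hUi i))
  -- abbreviations
  set P : Matrix (Fin nV) (Fin nV) ℝ := Matrix.diagonal (Pvol t) with hP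
  have hdet : IsUnit P.det := by
    rw [hP, Matrix.det_diagonal]
    exact (Finset.prod_pos fun i _ => hPvolpos t i).ne'.isUnit
  have hPinv : P * P⁻¹ = 1 := Matrix.mul_nonsing_inv P hdet
  -- lifting identity
  have hlift : ∀ x : Fin nS → ℝ, U t ⬝ᵥ (P *ᵥ (L t *ᵥ x))
      = (δ t *ᵥ U t) ⬝ᵥ (Matrix.diagonal Psurf *ᵥ x) := by
    intro x
    rw [hL t, Matrix.mulVec_mulVec, ← Matrix.mul_assoc, ← Matrix.mul_assoc, hPinv,
      Matrix.one_mul, ← Matrix.mulVec_mulVec, Matrix.dotProduct_mulVec,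
      Matrix.vecMul_transpose]
  -- SBP identity
  have hsbp : 2 * (U t ⬝ᵥ (P *ᵥ (Dm t *ᵥ U t)))
      = (E *ᵥ U t) ⬝ᵥ (Matrix.diagonal Psurf *ᵥ (Matrix.diagonal (W t) *ᵥ (E *ᵥ U t))) := by
    have h := congrArg (fun M => U t ⬝ᵥ (M *ᵥ U t)) (hSBP t)
    simp only [Matrix.add_mulVec, dotProduct_add] at h
    have h1 : U t ⬝ᵥ (((Dm t)ᵀ * Matrix.diagonal (Pvol t)) *ᵥ U t)
        = U t ⬝ᵥ (P *ᵥ (Dm t *ᵥ U t)) := by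
      rw [← Matrix.mulVec_mulVec, Matrix.dotProduct_mulVec, Matrix.vecMul_transpose, hP]
      simp only [dotProduct, Matrix.mulVec_diagonal]
      exact Finset.sum_congr rfl fun i _ => by ring
    have h2 : U t ⬝ᵥ ((Eᵀ * Matrix.diagonal Psurf * Matrix.diagonal (W t) * E) *ᵥ U t)
        = (E *ᵥ U t) ⬝ᵥ (Matrix.diagonal Psurf *ᵥ (Matrix.diagonal (W t) *ᵥ (E *ᵥ U t))) := by
      rw [Matrix.mul_assoc, Matrix.mul_assoc, ← Matrix.mulVec_mulVec,
        Matrix.dotProduct_mulVec, Matrix.vecMul_transpose, ← Matrix.mulVec_mulVec,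
        ← Matrix.mulVec_mulVec]
    rw [h1, h2] at h
    have hPD : U t ⬝ᵥ ((Matrix.diagonal (Pvol t) * Dm t) *ᵥ U t)
        = U t ⬝ᵥ (P *ᵥ (Dm t *ᵥ U t)) := by
      rw [← Matrix.mulVec_mulVec, hP]
    rw [hPD] at h
    linarith [h]
  -- expression for U'
  have hU' : U' t = (𝒟 t *ᵥ U t + L t *ᵥ (ℬ t *ᵥ U t - G t) + F t) + Dm t *ᵥ U t
      - (1 / 2 : ℝ) • (g t * U t) := by
    rw [← hscheme t, hUt t]; abel
  -- value of the g-term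
  have hgterm : U t ⬝ᵥ (P *ᵥ (g t * U t)) = ∑ i, g t i * (J t i * Pref i) * (U t i * U t i) := by
    simp [hP, dotProduct, Matrix.mulVec_diagonal, hPvol t]
    exact Finset.sum_congr rfl fun i _ => by ring
  -- sum form of 2 U P U'
  have hsum : (∑ i, (U' t i * (J t i * Pref i * U t i)
        + U t i * ((g t i * J t i * Pref i) * U t i + J t i * Pref i * U' t i)))
      = 2 * (U t ⬝ᵥ (P *ᵥ U' t)) + ∑ i, g t i * (J t i * Pref i) * (U t i * U t i) := by
    simp only [hP, dotProduct, Matrix.mulVec_diagonal, hPvol t, Pi.mul_apply,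
      Finset.mul_sum, ← Finset.sum_add_distrib]
    exact Finset.sum_congr rfl fun i _ => by ring
  have key : (∑ i, (U' t i * (J t i * Pref i * U t i)
        + U t i * ((g t i * J t i * Pref i) * U t i + J t i * Pref i * U' t i)))
      = 2 * (U t ⬝ᵥ (P *ᵥ (𝒟 t *ᵥ U t)))
        + 2 * ((δ t *ᵥ U t) ⬝ᵥ (Matrix.diagonal Psurf *ᵥ (ℬ t *ᵥ U t - G t)))
        + 2 * (U t ⬝ᵥ (P *ᵥ F t))
        + (E *ᵥ U t) ⬝ᵥ (Matrix.diagonal Psurf *ᵥ (Matrix.diagonal (W t) *ᵥ (E *ᵥ U t))) := by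
    rw [hsum, hU']
    simp only [Matrix.mulVec_add, Matrix.mulVec_sub, Matrix.mulVec_smul,
      dotProduct_add, dotProduct_sub, dotProduct_smul, smul_eq_mul]
    rw [hlift, hlift, ← hsbp, ← hgterm]
    ring
  exact key ▸ hderiv
end

section
/- Under the setup below with zero data F(t) = 0 and G(t) = 0, let U : ℝ → (Fin nV → ℝ) be a differentiable solution of the semi-discrete scheme U_t(t) = M(t)U(t), where M(t) = 𝒟(t) + L(t)ℬ(t), L(t) = diag(𝒫(t))⁻¹ δ(t)ᵀ diag(P), and U_t(t) := U'(t) − D_m(t)U(t) + (1/2) g(t) ⊙ U(t). Assume that for every t the matrix inequality diag(𝒫(t)) M(t) + M(t)ᵀ diag(𝒫(t)) + Eᵀ diag(P) diag(W(t)) E ≤ α diag(𝒫(t)) holds in the quadratic-form sense, i.e. xᵀ( diag(𝒫(t)) M(t) + M(t)ᵀ diag(𝒫(t)) + Eᵀ diag(P) diag(W(t)) E )x ≤ α xᵀ diag(𝒫(t)) x for all x ∈ ℝ^{nV}. Then the discrete energy satisfies d/dt [ U(t)ᵀ diag(𝒫(t)) U(t) ] ≤ α · U(t)ᵀ diag(𝒫(t))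 U(t) for all t. -/
open Matrix

lemma quadSym (n : ℕ) (p x : Fin n → ℝ) (A : Matrix (Fin n) (Fin n) ℝ) :
    x ⬝ᵥ ((Matrix.diagonal p * A + Aᵀ * Matrix.diagonal p) *ᵥ x)
      = ∑ i, 2 * (p i * x i * (A *ᵥ x) i) := by
  have h1 : x ⬝ᵥ ((Matrix.diagonal p * A) *ᵥ x) = ∑ i, p i * x i * (A *ᵥ x) i := by
    rw [← Matrix.mulVec_mulVec]
    simp [dotProduct, Matrix.mulVec_diagonal]
    exact Finset.sum_congr rfl fun i _ => by ring
  have h2 : x ⬝ᵥ ((Aᵀ * Matrix.diagonal p) *ᵥ x) = ∑ i, p i * x i * (A *ᵥ x) i := by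
    have : Aᵀ * Matrix.diagonal p = (Matrix.diagonal p * A)ᵀ := by
      rw [Matrix.transpose_mul, Matrix.diagonal_transpose]
    rw [this, Matrix.mulVec_transpose, dotProduct_comm, ← Matrix.dotProduct_mulVec, h1]
  rw [Matrix.add_mulVec, dotProduct_add, h1, h2, ← Finset.sum_add_distrib]
  exact Finset.sum_congr rfl fun i _ => by ring

/-- The discrete energy estimate following from the energy identity (3.16) together
with the matrix condition (3.19): with zero data, if the system matrix
`M(t) = 𝒟(t) + L(t)ℬ(t)` satisfies the quadratic-form inequality, then the discrete
energy `U(t)ᵀ diag(𝒫(t)) U(t)` is differentiable and its derivative is bounded by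
`α` times the energy. -/
theorem stmt6 (nV nS : ℕ) (hnV : 0 < nV) (hnS : 0 < nS)
    (σ : Fin nS → Fin nV) (hσ : Function.Injective σ)
    (E : Matrix (Fin nS) (Fin nV) ℝ)
    (hE : ∀ (k : Fin nS) (j : Fin nV), E k j = if j = σ k then 1 else 0)
    (Psurf : Fin nS → ℝ) (hPsurf : ∀ k, 0 < Psurf k)
    (Pref : Fin nV → ℝ) (hPref : ∀ i, 0 < Pref i)
    (g J : ℝ → Fin nV → ℝ) (hJpos : ∀ (t : ℝ) (i : Fin nV), 0 < J t i)
    (hJ : ∀ (t : ℝ) (i : Fin nV), HasDerivAt (fun s => J s i) (g t i * J t i) t)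
    (Pvol : ℝ → Fin nV → ℝ) (hPvol : ∀ t : ℝ, Pvol t = J t * Pref)
    (Dm : ℝ → Matrix (Fin nV) (Fin nV) ℝ) (W : ℝ → Fin nS → ℝ)
    (hSBP : ∀ t : ℝ, Matrix.diagonal (Pvol t) * Dm t + (Dm t)ᵀ * Matrix.diagonal (Pvol t)
      = Eᵀ * Matrix.diagonal Psurf * Matrix.diagonal (W t) * E)
    (𝒟 : ℝ → Matrix (Fin nV) (Fin nV) ℝ)
    (ℬ δ : ℝ → Matrix (Fin nS) (Fin nV) ℝ)
    (L : ℝ → Matrix (Fin nV) (Fin nS) ℝ)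
    (hL : ∀ t : ℝ, L t = (Matrix.diagonal (Pvol t))⁻¹ * (δ t)ᵀ * Matrix.diagonal Psurf)
    (M : ℝ → Matrix (Fin nV) (Fin nV) ℝ) (hM : ∀ t : ℝ, M t = 𝒟 t + L t * ℬ t)
    (α : ℝ)
    (hineq : ∀ (t : ℝ) (x : Fin nV → ℝ),
      x ⬝ᵥ ((Matrix.diagonal (Pvol t) * M t + (M t)ᵀ * Matrix.diagonal (Pvol t)
          + Eᵀ * Matrix.diagonal Psurf * Matrix.diagonal (W t) * E) *ᵥ x)
        ≤ α * (x ⬝ᵥ (Matrix.diagonal (Pvol t) *ᵥ x)))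
    (U U' : ℝ → Fin nV → ℝ) (hU : ∀ t : ℝ, HasDerivAt U (U' t) t)
    (Ut : ℝ → Fin nV → ℝ)
    (hUt : ∀ t : ℝ, Ut t = U' t - Dm t *ᵥ U t + (1 / 2 : ℝ) • (g t * U t))
    (hscheme : ∀ t : ℝ, Ut t = M t *ᵥ U t) :
    ∀ t : ℝ, ∃ d : ℝ,
      HasDerivAt (fun s => U s ⬝ᵥ (Matrix.diagonal (Pvol s) *ᵥ U s)) d t
      ∧ d ≤ α * (U t ⬝ᵥ (Matrix.diagonal (Pvol t) *ᵥ U t)) := by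
  intro t
  refine ⟨∑ i, (U' t i * (J t i * Pref i * U t i)
        + U t i * ((g t i * J t i) * Pref i * U t i + J t i * Pref i * U' t i)), ?_, ?_⟩
  · have hfun : (fun s => U s ⬝ᵥ (Matrix.diagonal (Pvol s) *ᵥ U s))
        = fun s => ∑ i, U s i * (J s i * Pref i * U s i) := by
      funext s
      simp only [dotProduct, Matrix.mulVec_diagonal, hPvol s, Pi.mul_apply]
    rw [hfun]
    apply HasDerivAt.fun_sum
    intro i _
    have hUi : HasDerivAt (fun s => U s i) (U' t i) t := (hasDerivAt_pi.mp (hU t)) i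
    exact hUi.mul ((((hJ t i).mul_const (Pref i)).mul hUi))
  · have hU' : U' t = (M t + Dm t) *ᵥ U t - (1 / 2 : ℝ) • (g t * U t) := by
      have h := hscheme t
      rw [hUt t] at h
      rw [Matrix.add_mulVec, ← h]
      abel
    have hmat : Matrix.diagonal (Pvol t) * (M t + Dm t)
          + (M t + Dm t)ᵀ * Matrix.diagonal (Pvol t)
        = Matrix.diagonal (Pvol t) * M t + (M t)ᵀ * Matrix.diagonal (Pvol t)
          + Eᵀ * Matrix.diagonal Psurf * Matrix.diagonal (W t) * E := by
      rw [← hSBP t, Matrix.mul_add, Matrix.transpose_add, Matrix.add_mul]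
      abel
    have hsum : (∑ i, (U' t i * (J t i * Pref i * U t i)
        + U t i * ((g t i * J t i) * Pref i * U t i + J t i * Pref i * U' t i)))
        = U t ⬝ᵥ ((Matrix.diagonal (Pvol t) * M t + (M t)ᵀ * Matrix.diagonal (Pvol t)
          + Eᵀ * Matrix.diagonal Psurf * Matrix.diagonal (W t) * E) *ᵥ U t) := by
      rw [← hmat, quadSym]
      refine Finset.sum_congr rfl fun i _ => ?_
      have hUi' : U' t i = ((M t + Dm t) *ᵥ U t) i - (1 / 2 : ℝ) * (g t i * U t i) := by
        rw [hU']; simp [Pi.smul_apply]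
      have hPi : Pvol t i = J t i * Pref i := by rw [hPvol t]; rfl
      rw [hUi', hPi]
      ring
    rw [hsum]
    exact hineq t (U t)
end

section
/- Let nV, nS be positive integers, σ : Fin nS → Fin nV injective with restriction matrix E (E k j = 1 if j = σ k, else 0), P : Fin nS → ℝ strictly positive, P̂ : Fin nV → ℝ strictly positive, 𝒥 : Fin nV → ℝ strictly positive, and set 𝒫 = 𝒥 ⊙ P̂ (componentwise product). Let W : Fin nS → ℝ and let D_m be an nV × nV real matrix satisfying the SBP property diag(𝒫) D_m + D_mᵀ diag(𝒫) = Eᵀ diag(P) diag(W) E. Let M be any nV × nV real matrix, α ∈ ℝ, and define M̂ = diag(√𝒥) (M + D_m) diag(√𝒥)⁻¹ (componentwise square roots). Then the following two conditions are equivalent: (1) for all x ∈ ℝ^{nV}, xᵀ( diag(𝒫) M + Mᵀ diag(𝒫) + Eᵀ diag(P) diag(W) E )x ≤ α xᵀ diag(𝒫) x; (2) for all x ∈ ℝ^{nV}, xᵀ( diag(P̂) M̂ + M̂ᵀ diag(P̂) )x ≤ α xᵀ diag(P̂) x. -/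
open Matrix

/-- Proposition 3.3 of the paper: equivalence between the energy-estimate matrix
condition (3.19) for the system matrix `M` (with moving-mesh quadrature
`𝒫 = 𝒥 ⊙ P̂` and surface term `W = N·Ẋ`) and the semi-boundedness condition (3.20)
for the transformed matrix `M̂ = diag(√𝒥)(M + D_m)diag(√𝒥)⁻¹` with respect to the
constant reference quadrature `P̂`. -/
theorem stmt7 (nV nS : ℕ) (hnV : 0 < nV) (hnS : 0 < nS)
    (σ : Fin nS → Fin nV) (hσ : Function.Injective σ)
    (E : Matrix (Fin nS) (Fin nV) ℝ)
    (hE : ∀ (k : Fin nS) (j : Fin nV), E k j = if j = σ k then 1 else 0)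
    (Psurf : Fin nS → ℝ) (hPsurf : ∀ k, 0 < Psurf k)
    (Pref : Fin nV → ℝ) (hPref : ∀ i, 0 < Pref i)
    (J : Fin nV → ℝ) (hJ : ∀ i, 0 < J i)
    (Pvol : Fin nV → ℝ) (hPvol : Pvol = J * Pref)
    (W : Fin nS → ℝ)
    (Dm : Matrix (Fin nV) (Fin nV) ℝ)
    (hSBP : Matrix.diagonal Pvol * Dm + Dmᵀ * Matrix.diagonal Pvol
      = Eᵀ * Matrix.diagonal Psurf * Matrix.diagonal W * E)
    (M : Matrix (Fin nV) (Fin nV) ℝ) (α : ℝ)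
    (Mhat : Matrix (Fin nV) (Fin nV) ℝ)
    (hMhat : Mhat = Matrix.diagonal (fun i => Real.sqrt (J i)) * (M + Dm)
      * (Matrix.diagonal (fun i => Real.sqrt (J i)))⁻¹) :
    (∀ x : Fin nV → ℝ,
      x ⬝ᵥ ((Matrix.diagonal Pvol * M + Mᵀ * Matrix.diagonal Pvol
          + Eᵀ * Matrix.diagonal Psurf * Matrix.diagonal W * E) *ᵥ x)
        ≤ α * (x ⬝ᵥ (Matrix.diagonal Pvol *ᵥ x)))
    ↔ (∀ x : Fin nV → ℝ,
      x ⬝ᵥ ((Matrix.diagonal Pref * Mhat + Mhatᵀ * Matrix.diagonal Pref) *ᵥ x)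
        ≤ α * (x ⬝ᵥ (Matrix.diagonal Pref *ᵥ x))) := by
  set s : Fin nV → ℝ := fun i => Real.sqrt (J i) with hs
  have hspos : ∀ i, 0 < s i := fun i => Real.sqrt_pos.2 (hJ i)
  have hsne : ∀ i, s i ≠ 0 := fun i => (hspos i).ne'
  have hs2 : ∀ i, s i * s i = J i := fun i => Real.mul_self_sqrt (hJ i).le
  have hPv : ∀ i, Pvol i = J i * Pref i := fun i => by rw [hPvol]; rfl
  set A : Matrix (Fin nV) (Fin nV) ℝ := M + Dm with hA
  set K : Matrix (Fin nV) (Fin nV) ℝ :=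
    Matrix.diagonal Pvol * A + Aᵀ * Matrix.diagonal Pvol with hK
  have hKmat : Matrix.diagonal Pvol * M + Mᵀ * Matrix.diagonal Pvol
      + Eᵀ * Matrix.diagonal Psurf * Matrix.diagonal W * E = K := by
    rw [hK, hA, ← hSBP, Matrix.transpose_add, Matrix.mul_add, Matrix.add_mul]
    abel
  set Sinv : Matrix (Fin nV) (Fin nV) ℝ := Matrix.diagonal (fun i => (s i)⁻¹) with hSinv
  have hinv : (Matrix.diagonal s)⁻¹ = Sinv := by
    apply Matrix.inv_eq_right_inv
    rw [hSinv, Matrix.diagonal_mul_diagonal, ← Matrix.diagonal_one]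
    exact congrArg Matrix.diagonal (funext fun i => mul_inv_cancel₀ (hsne i))
  have h1 : Matrix.diagonal Pref * Matrix.diagonal s = Sinv * Matrix.diagonal Pvol := by
    rw [hSinv, Matrix.diagonal_mul_diagonal, Matrix.diagonal_mul_diagonal]
    refine congrArg Matrix.diagonal (funext fun i => ?_)
    show Pref i * s i = (s i)⁻¹ * Pvol i
    rw [hPv i, ← hs2 i]
    field_simp [hsne i]
  have h2 : Matrix.diagonal s * Matrix.diagonal Pref = Matrix.diagonal Pvol * Sinv := by
    rw [hSinv, Matrix.diagonal_mul_diagonal, Matrix.diagonal_mul_diagonal]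
    refine congrArg Matrix.diagonal (funext fun i => ?_)
    show s i * Pref i = Pvol i * (s i)⁻¹
    rw [hPv i, ← hs2 i]
    field_simp [hsne i]
  have hSt : Sinvᵀ = Sinv := by rw [hSinv]; exact Matrix.diagonal_transpose _
  have hst : (Matrix.diagonal s)ᵀ = Matrix.diagonal s := Matrix.diagonal_transpose s
  have hKey : Matrix.diagonal Pref * Mhat + Mhatᵀ * Matrix.diagonal Pref
      = Sinv * K * Sinv := by
    rw [hMhat, hinv, hK]
    simp only [Matrix.transpose_mul, hSt, hst, Matrix.mul_add, Matrix.add_mul,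
      Matrix.mul_assoc]
    rw [← Matrix.mul_assoc (Matrix.diagonal Pref), h1, h2]
    simp only [Matrix.mul_assoc]
  have hq : ∀ (B : Matrix (Fin nV) (Fin nV) ℝ) (x : Fin nV → ℝ),
      x ⬝ᵥ ((Sinv * B * Sinv) *ᵥ x) = (Sinv *ᵥ x) ⬝ᵥ (B *ᵥ (Sinv *ᵥ x)) := by
    intro B x
    rw [← Matrix.mulVec_mulVec, ← Matrix.mulVec_mulVec, Matrix.dotProduct_mulVec x Sinv]
    congr 1
    rw [hSinv]
    funext i
    simp [Matrix.vecMul_diagonal, Matrix.mulVec_diagonal, mul_comm]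
  have hqref : ∀ x : Fin nV → ℝ,
      x ⬝ᵥ (Matrix.diagonal Pref *ᵥ x) = (Sinv *ᵥ x) ⬝ᵥ (Matrix.diagonal Pvol *ᵥ (Sinv *ᵥ x)) := by
    intro x
    rw [hSinv]
    simp only [dotProduct, Matrix.mulVec_diagonal]
    refine Finset.sum_congr rfl fun i _ => ?_
    rw [hPv i, ← hs2 i]
    field_simp [hsne i]
  have hsurj : ∀ y : Fin nV → ℝ, Sinv *ᵥ (Matrix.diagonal s *ᵥ y) = y := by
    intro y
    rw [hSinv]
    funext i
    simp only [Matrix.mulVec_diagonal]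
    rw [inv_mul_eq_div, mul_comm, mul_div_assoc, div_self (hsne i), mul_one]
  rw [hKmat]
  constructor
  · intro h x
    rw [hKey, hq, hqref]
    exact h _
  · intro h y
    have := h (Matrix.diagonal s *ᵥ y)
    rw [hKey, hq, hqref, hsurj] at this
    exact this
end

section
/- With the SBP setup below, assume each partial derivative operator is consistent: D_i 𝟙 = 0 for i = 1,…,p, where 𝟙 is the all-ones vector in ℝ^{nV}. Then D_m 𝟙 = (1/2) Σ_{i=1}^p D_i Ẋ_i; consequently, with the discrete divergence defined as ∇·Ẋ := Σ_{i=1}^p D_i Ẋ_i, one has ( D_m − (1/2) diag(∇·Ẋ) ) 𝟙 = 0. -/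
open Matrix

/-- The key consistency computation in the proof of Proposition 4.1: if the SBP
partial derivative operators are consistent (`Dᵢ 𝟙 = 0`), then
`D_m 𝟙 = (1/2) Σᵢ Dᵢ Ẋᵢ`, and with the discrete divergence `∇·Ẋ = Σᵢ Dᵢ Ẋᵢ` one has
`(D_m − (1/2) diag(∇·Ẋ)) 𝟙 = 0`. -/
theorem stmt10 (nV nS p : ℕ) (hnV : 0 < nV) (hnS : 0 < nS) (hp : 0 < p)
    (σ : Fin nS → Fin nV) (hσ : Function.Injective σ)
    (E : Matrix (Fin nS) (Fin nV) ℝ)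
    (hE : ∀ (k : Fin nS) (j : Fin nV), E k j = if j = σ k then 1 else 0)
    (Pvol : Fin nV → ℝ) (hPvol : ∀ i, 0 < Pvol i)
    (Psurf : Fin nS → ℝ) (hPsurf : ∀ k, 0 < Psurf k)
    (N : Fin p → Fin nS → ℝ)
    (Q : Fin p → Matrix (Fin nV) (Fin nV) ℝ)
    (hQ : ∀ i, Q i + (Q i)ᵀ = Eᵀ * Matrix.diagonal Psurf * Matrix.diagonal (N i) * E)
    (D : Fin p → Matrix (Fin nV) (Fin nV) ℝ)
    (hD : ∀ i, D i = (Matrix.diagonal Pvol)⁻¹ * Q i)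
    (Xd : Fin p → Fin nV → ℝ)
    (Dm : Matrix (Fin nV) (Fin nV) ℝ)
    (hDm : Dm = (1 / 2 : ℝ) •
      ∑ i, (Matrix.diagonal (Xd i) * D i + D i * Matrix.diagonal (Xd i)))
    (hcons : ∀ i, D i *ᵥ (1 : Fin nV → ℝ) = 0) :
    Dm *ᵥ (1 : Fin nV → ℝ) = (1 / 2 : ℝ) • ∑ i, D i *ᵥ Xd i ∧
    (Dm - (1 / 2 : ℝ) • Matrix.diagonal (∑ i, D i *ᵥ Xd i)) *ᵥ (1 : Fin nV → ℝ) = 0 := by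
  have hdiag1 : ∀ v : Fin nV → ℝ, Matrix.diagonal v *ᵥ (1 : Fin nV → ℝ) = v := by
    intro v; ext j; simp [Matrix.mulVec_diagonal]
  have hsum : ∀ (M : Fin p → Matrix (Fin nV) (Fin nV) ℝ) (x : Fin nV → ℝ),
      (∑ i, M i) *ᵥ x = ∑ i, M i *ᵥ x := by
    intro M x
    ext j
    simp only [Matrix.mulVec, dotProduct, Matrix.sum_apply, Finset.sum_apply,
      Finset.sum_mul]
    exact Finset.sum_comm
  have h1 : Dm *ᵥ (1 : Fin nV → ℝ) = (1 / 2 : ℝ) • ∑ i, D i *ᵥ Xd i := by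
    rw [hDm, smul_mulVec, hsum]
    congr 1
    refine Finset.sum_congr rfl fun i _ => ?_
    rw [Matrix.add_mulVec, ← Matrix.mulVec_mulVec, ← Matrix.mulVec_mulVec, hcons i,
      Matrix.mulVec_zero, hdiag1]
    simp
  refine ⟨h1, ?_⟩
  rw [Matrix.sub_mulVec, h1, smul_mulVec, hdiag1, sub_self]
end

section
/- With the SBP setup below, assume D_i 𝟙 = 0 for i = 1,…,p, and define the discrete divergence ∇·Ẋ(t) := Σ_{i=1}^p D_i Ẋ_i(t) (using the same operators D_i as in D_m(t)). Let u∞ ∈ ℝ, and assume the consistency conditions: 𝒟(u∞𝟙, t)(u∞𝟙) = 0, ℬ(u∞𝟙, t)(u∞𝟙) = G(t), and F(t) = 0 for all t. Then the constant function U(t) = u∞𝟙 is a stationary solution of the semi-discrete scheme; that is, for every t, ( D_m(t) − (1/2) diag(∇·Ẋ(t)) )(u∞𝟙) + 𝒟(u∞𝟙, t)(u∞𝟙) + L(t)( ℬ(u∞𝟙, t)(u∞𝟙) − G(t) ) + F(t) = 0, where L(t) = diag(𝒫)⁻¹ δ(t)ᵀ diag(P). -/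
open Matrix

/-- Proposition 4.1 of the paper: semi-discrete free-stream preservation. Under the
consistency conditions `Dᵢ 𝟙 = 0`, `𝒟(u∞𝟙,t)(u∞𝟙) = 0`, `ℬ(u∞𝟙,t)(u∞𝟙) = G(t)` and
`F(t) = 0`, the constant state `u∞𝟙` is a stationary solution of the semi-discrete
scheme: the full right-hand side evaluated at `u∞𝟙` vanishes. -/
theorem stmt11 (nV nS p : ℕ) (hnV : 0 < nV) (hnS : 0 < nS) (hp : 0 < p)
    (σ : Fin nS → Fin nV) (hσ : Function.Injective σ)
    (E : Matrix (Fin nS) (Fin nV) ℝ)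
    (hE : ∀ (k : Fin nS) (j : Fin nV), E k j = if j = σ k then 1 else 0)
    (Pvol : Fin nV → ℝ) (hPvol : ∀ i, 0 < Pvol i)
    (Psurf : Fin nS → ℝ) (hPsurf : ∀ k, 0 < Psurf k)
    (N : Fin p → Fin nS → ℝ)
    (Q : Fin p → Matrix (Fin nV) (Fin nV) ℝ)
    (hQ : ∀ i, Q i + (Q i)ᵀ = Eᵀ * Matrix.diagonal Psurf * Matrix.diagonal (N i) * E)
    (D : Fin p → Matrix (Fin nV) (Fin nV) ℝ)
    (hD : ∀ i, D i = (Matrix.diagonal Pvol)⁻¹ * Q i)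
    (Xd : Fin p → ℝ → Fin nV → ℝ)
    (Dm : ℝ → Matrix (Fin nV) (Fin nV) ℝ)
    (hDm : ∀ t : ℝ, Dm t = (1 / 2 : ℝ) •
      ∑ i, (Matrix.diagonal (Xd i t) * D i + D i * Matrix.diagonal (Xd i t)))
    (divX : ℝ → Fin nV → ℝ)
    (hdivX : ∀ t : ℝ, divX t = ∑ i, D i *ᵥ Xd i t)
    (𝒟 : (Fin nV → ℝ) → ℝ → Matrix (Fin nV) (Fin nV) ℝ)
    (ℬ : (Fin nV → ℝ) → ℝ → Matrix (Fin nS) (Fin nV) ℝ)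
    (δ : ℝ → Matrix (Fin nS) (Fin nV) ℝ)
    (G : ℝ → Fin nS → ℝ) (F : ℝ → Fin nV → ℝ)
    (L : ℝ → Matrix (Fin nV) (Fin nS) ℝ)
    (hL : ∀ t : ℝ, L t = (Matrix.diagonal Pvol)⁻¹ * (δ t)ᵀ * Matrix.diagonal Psurf)
    (uinf : ℝ)
    (hcons : ∀ i, D i *ᵥ (1 : Fin nV → ℝ) = 0)
    (h𝒟 : ∀ t : ℝ, 𝒟 (uinf • (1 : Fin nV → ℝ)) t *ᵥ (uinf • (1 : Fin nV → ℝ)) = 0)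
    (hℬ : ∀ t : ℝ, ℬ (uinf • (1 : Fin nV → ℝ)) t *ᵥ (uinf • (1 : Fin nV → ℝ)) = G t)
    (hF : ∀ t : ℝ, F t = 0) :
    ∀ t : ℝ,
      (Dm t - (1 / 2 : ℝ) • Matrix.diagonal (divX t)) *ᵥ (uinf • (1 : Fin nV → ℝ))
        + 𝒟 (uinf • (1 : Fin nV → ℝ)) t *ᵥ (uinf • (1 : Fin nV → ℝ))
        + L t *ᵥ (ℬ (uinf • (1 : Fin nV → ℝ)) t *ᵥ (uinf • (1 : Fin nV → ℝ)) - G t)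
        + F t = 0 := by
  intro t
  have hu : (uinf • (1 : Fin nV → ℝ)) = uinf • (1 : Fin nV → ℝ) := rfl
  have key : ∀ i : Fin p,
      (Matrix.diagonal (Xd i t) * D i + D i * Matrix.diagonal (Xd i t)) *ᵥ
        (uinf • (1 : Fin nV → ℝ)) = uinf • (D i *ᵥ Xd i t) := by
    intro i
    rw [Matrix.add_mulVec, ← Matrix.mulVec_mulVec, ← Matrix.mulVec_mulVec,
      Matrix.mulVec_smul, hcons i, smul_zero, Matrix.mulVec_zero, zero_add,
      Matrix.mulVec_smul]
    have h1 : Matrix.diagonal (Xd i t) *ᵥ (1 : Fin nV → ℝ) = Xd i t := by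
      funext j; simp [Matrix.mulVec_diagonal]
    rw [h1, Matrix.mulVec_smul]
  have hdiag : Matrix.diagonal (divX t) *ᵥ (uinf • (1 : Fin nV → ℝ))
      = uinf • divX t := by
    funext j; simp [Matrix.mulVec_diagonal, mul_comm]
  have hsum : ∀ (M : Fin p → Matrix (Fin nV) (Fin nV) ℝ) (v : Fin nV → ℝ),
      (∑ i, M i) *ᵥ v = ∑ i, M i *ᵥ v := by
    intro M v
    funext j
    simp only [Matrix.mulVec, dotProduct, Matrix.sum_apply, Finset.sum_apply,
      Finset.sum_mul]
    exact Finset.sum_comm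
  have hmain : (Dm t - (1 / 2 : ℝ) • Matrix.diagonal (divX t)) *ᵥ
      (uinf • (1 : Fin nV → ℝ)) = 0 := by
    rw [Matrix.sub_mulVec, hDm t, Matrix.smul_mulVec, Matrix.smul_mulVec,
      hsum, hdiag, hdivX]
    simp only [key]
    rw [← Finset.smul_sum, smul_comm]
    simp
  rw [hmain, h𝒟 t, hℬ t, hF t, sub_self, Matrix.mulVec_zero]
  simp
end

section
/- With the setup below, assume D_i 𝟙 = 0 for i = 1,…,p, 𝒟(u∞𝟙, t)(u∞𝟙) = 0, ℬ(u∞𝟙, t)(u∞𝟙) = G(t), and F(t) = 0, and define ∇·Ẋ(t) := Σ_{i=1}^p D_i Ẋ_i(t) and the right-hand-side function RHS(w, V, t) := diag(w) [ D_m(t) V + 𝒟(V, t) V + L(t)( ℬ(V, t) V − G(t) ) + F(t) ], where L(t) = diag(𝒫)⁻¹ δ(t)ᵀ diag(P). Then for every vector w ∈ ℝ^{nV}, every u∞ ∈ ℝ, and every t: RHS(w, u∞𝟙, t) = (u∞/2) · (∇·Ẋ(t)) ⊙ w, where ⊙ denotes the componentwise product. -/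
open Matrix

lemma my_sum_mulVec {m n ι : Type*} [Fintype n] (s : Finset ι)
    (M : ι → Matrix m n ℝ) (v : n → ℝ) :
    (∑ i ∈ s, M i) *ᵥ v = ∑ i ∈ s, M i *ᵥ v := by
  funext j
  simp only [Matrix.mulVec, dotProduct, Finset.sum_apply, Matrix.sum_apply,
    Finset.sum_mul]
  rw [Finset.sum_comm]

/-- Identity (4.4) of the paper: evaluated at the free-stream state `u∞𝟙`, the
right-hand side `RHS(w, V, t) = diag(w)[D_m V + 𝒟(V,t)V + L(ℬ(V,t)V − G) + F]` of
the transformed scheme reduces to `(u∞/2)(∇·Ẋ) ⊙ w`. -/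
theorem stmt12 (nV nS p : ℕ) (hnV : 0 < nV) (hnS : 0 < nS) (hp : 0 < p)
    (σ : Fin nS → Fin nV) (hσ : Function.Injective σ)
    (E : Matrix (Fin nS) (Fin nV) ℝ)
    (hE : ∀ (k : Fin nS) (j : Fin nV), E k j = if j = σ k then 1 else 0)
    (Pvol : Fin nV → ℝ) (hPvol : ∀ i, 0 < Pvol i)
    (Psurf : Fin nS → ℝ) (hPsurf : ∀ k, 0 < Psurf k)
    (N : Fin p → Fin nS → ℝ)
    (Q : Fin p → Matrix (Fin nV) (Fin nV) ℝ)
    (hQ : ∀ i, Q i + (Q i)ᵀ = Eᵀ * Matrix.diagonal Psurf * Matrix.diagonal (N i) * E)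
    (D : Fin p → Matrix (Fin nV) (Fin nV) ℝ)
    (hD : ∀ i, D i = (Matrix.diagonal Pvol)⁻¹ * Q i)
    (Xd : Fin p → ℝ → Fin nV → ℝ)
    (Dm : ℝ → Matrix (Fin nV) (Fin nV) ℝ)
    (hDm : ∀ t : ℝ, Dm t = (1 / 2 : ℝ) •
      ∑ i, (Matrix.diagonal (Xd i t) * D i + D i * Matrix.diagonal (Xd i t)))
    (divX : ℝ → Fin nV → ℝ)
    (hdivX : ∀ t : ℝ, divX t = ∑ i, D i *ᵥ Xd i t)
    (𝒟 : (Fin nV → ℝ) → ℝ → Matrix (Fin nV) (Fin nV) ℝ)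
    (ℬ : (Fin nV → ℝ) → ℝ → Matrix (Fin nS) (Fin nV) ℝ)
    (δ : ℝ → Matrix (Fin nS) (Fin nV) ℝ)
    (G : ℝ → Fin nS → ℝ) (F : ℝ → Fin nV → ℝ)
    (L : ℝ → Matrix (Fin nV) (Fin nS) ℝ)
    (hL : ∀ t : ℝ, L t = (Matrix.diagonal Pvol)⁻¹ * (δ t)ᵀ * Matrix.diagonal Psurf)
    (RHS : (Fin nV → ℝ) → (Fin nV → ℝ) → ℝ → (Fin nV → ℝ))
    (hRHS : ∀ (w V : Fin nV → ℝ) (t : ℝ),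
      RHS w V t = Matrix.diagonal w *ᵥ
        (Dm t *ᵥ V + 𝒟 V t *ᵥ V + L t *ᵥ (ℬ V t *ᵥ V - G t) + F t))
    (hcons : ∀ i, D i *ᵥ (1 : Fin nV → ℝ) = 0)
    (h𝒟 : ∀ (uinf : ℝ) (t : ℝ),
      𝒟 (uinf • (1 : Fin nV → ℝ)) t *ᵥ (uinf • (1 : Fin nV → ℝ)) = 0)
    (hℬ : ∀ (uinf : ℝ) (t : ℝ),
      ℬ (uinf • (1 : Fin nV → ℝ)) t *ᵥ (uinf • (1 : Fin nV → ℝ)) = G t)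
    (hF : ∀ t : ℝ, F t = 0) :
    ∀ (w : Fin nV → ℝ) (uinf : ℝ) (t : ℝ),
      RHS w (uinf • (1 : Fin nV → ℝ)) t = (uinf / 2) • (divX t * w) := by
  intro w uinf t
  have hDmv : Dm t *ᵥ (uinf • (1 : Fin nV → ℝ)) = (uinf / 2) • divX t := by
    rw [hDm, hdivX, Matrix.smul_mulVec, my_sum_mulVec]
    have : ∀ i : Fin p,
        (Matrix.diagonal (Xd i t) * D i + D i * Matrix.diagonal (Xd i t)) *ᵥ
          (uinf • (1 : Fin nV → ℝ)) = uinf • (D i *ᵥ Xd i t) := by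
      intro i
      have hdiag : Matrix.diagonal (Xd i t) *ᵥ (uinf • (1 : Fin nV → ℝ))
          = uinf • Xd i t := by
        funext j
        simp [Matrix.mulVec_diagonal]
        ring
      rw [Matrix.add_mulVec, ← Matrix.mulVec_mulVec, ← Matrix.mulVec_mulVec,
        Matrix.mulVec_smul, hcons i, smul_zero, Matrix.mulVec_zero, zero_add,
        hdiag, Matrix.mulVec_smul]
    simp only [this, ← Finset.smul_sum, smul_smul]
    ring_nf
  rw [hRHS, hDmv, hℬ, h𝒟, hF]
  simp only [sub_self, Matrix.mulVec_zero, add_zero]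
  funext j
  simp only [Matrix.mulVec_diagonal, Pi.smul_apply, Pi.mul_apply, smul_eq_mul]
  ring
end

section
/- Consider one step of an s-stage explicit Runge–Kutta method applied to the coupled system for the Jacobian square root and the transformed solution. Let n ≥ 1 and s ≥ 1 be integers, a : Fin s → Fin s → ℝ, b, c : Fin s → ℝ the Runge–Kutta coefficients, Δt ∈ ℝ the step size, t_n ∈ ℝ the current time, r : Fin n → ℝ the current Jacobian square-root vector, u∞ ∈ ℝ, and U^n = u∞𝟙 the current solution. Let g : ℝ → (Fin n → ℝ) and let RHS : (Fin n → ℝ) → (Fin n → ℝ) → ℝ → (Fin n → ℝ) satisfy the free-stream identity RHS(w, u∞𝟙, t) = (u∞/2) · g(t) ⊙ w for every w ∈ ℝ^n and every t ∈ ℝ. Define the stage vectors recursively for k = 1,…,s by r̄^k = r + Δt Σ_{ν < k} (a_{kν}/2) g(t_n + c_ν Δt) ⊙ r̄^ν and Ū^k determined by r̄^k ⊙ Ū^k = r ⊙ U^n + Δt Σ_{ν < k} a_{kν} RHS(r̄^ν, Ū^ν, t_n + c_ν Δt), assuming every component of every r̄^k is nonzero. Define the update r^{new} = r + Δt Σ_{k=1}^s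 (b_k/2) g(t_n + c_k Δt) ⊙ r̄^k and U^{n+1} determined by r^{new} ⊙ U^{n+1} = r ⊙ U^n + Δt Σ_{k=1}^s b_k RHS(r̄^k, Ū^k, t_n + c_k Δt), assuming every component of r^{new} is nonzero. Then Ū^k = u∞𝟙 for every stage k = 1,…,s, and U^{n+1} = u∞𝟙. -/
open Matrix Finset

/-- Proposition 4.2 of the paper: free-stream preservation of one step of an
`s`-stage explicit Runge–Kutta method applied to the semi-coupled system (4.5)
for the Jacobian square root `r` and the transformed solution, given the
free-stream consistency identity `RHS(w, u∞𝟙, t) = (u∞/2) g(t) ⊙ w`. -/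
theorem stmt13 (n s : ℕ) (hn : 0 < n) (hs : 0 < s)
    (a : Fin s → Fin s → ℝ) (b c : Fin s → ℝ)
    (Δt tn : ℝ) (r : Fin n → ℝ) (uinf : ℝ)
    (g : ℝ → Fin n → ℝ)
    (RHS : (Fin n → ℝ) → (Fin n → ℝ) → ℝ → (Fin n → ℝ))
    (hRHS : ∀ (w : Fin n → ℝ) (t : ℝ),
      RHS w (uinf • (1 : Fin n → ℝ)) t = (uinf / 2) • (g t * w))
    (rbar Ubar : Fin s → Fin n → ℝ)
    (hrbar : ∀ k : Fin s, rbar k = r + Δt •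
      ∑ ν ∈ Finset.univ.filter (fun ν => ν < k),
        (a k ν / 2) • (g (tn + c ν * Δt) * rbar ν))
    (hUbar : ∀ k : Fin s, rbar k * Ubar k = r * (uinf • (1 : Fin n → ℝ)) + Δt •
      ∑ ν ∈ Finset.univ.filter (fun ν => ν < k),
        a k ν • RHS (rbar ν) (Ubar ν) (tn + c ν * Δt))
    (hrbar_ne : ∀ (k : Fin s) (i : Fin n), rbar k i ≠ 0)
    (rnew Unew : Fin n → ℝ)
    (hrnew : rnew = r + Δt • ∑ k : Fin s, (b k / 2) • (g (tn + c k * Δt) * rbar k))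
    (hUnew : rnew * Unew = r * (uinf • (1 : Fin n → ℝ)) + Δt •
      ∑ k : Fin s, b k • RHS (rbar k) (Ubar k) (tn + c k * Δt))
    (hrnew_ne : ∀ i : Fin n, rnew i ≠ 0) :
    (∀ k : Fin s, Ubar k = uinf • (1 : Fin n → ℝ)) ∧
    Unew = uinf • (1 : Fin n → ℝ) := by
  have cancel : ∀ (v w : Fin n → ℝ), (∀ i, v i ≠ 0) → v * w = uinf • v →
      w = uinf • (1 : Fin n → ℝ) := by
    intro v w hv h
    funext i
    have h2 : v i * w i = uinf * v i := congrFun h i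
    have h3 : w i = uinf := mul_left_cancel₀ (hv i) (h2.trans (mul_comm uinf (v i)))
    simp [h3]
  have hr_uinf : r * (uinf • (1 : Fin n → ℝ)) = uinf • r := by
    funext i; simp [mul_comm]
  have reshape : ∀ (α : Fin s → ℝ) (F : Fin s → Fin n → ℝ) (T : Finset (Fin s)),
      Δt • ∑ k ∈ T, α k • ((uinf / 2) • F k)
        = uinf • (Δt • ∑ k ∈ T, (α k / 2) • F k) := by
    intro α F T
    simp only [Finset.smul_sum, smul_smul]
    apply Finset.sum_congr rfl
    intro k _
    congr 1
    ring
  have key0 : ∀ m : ℕ, ∀ k : Fin s, (k : ℕ) < m → Ubar k = uinf • (1 : Fin n → ℝ) := by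
    intro m
    induction m with
    | zero => intro k hk; omega
    | succ m ihm =>
      intro k hk
      have ih : ∀ ν : Fin s, ν < k → Ubar ν = uinf • (1 : Fin n → ℝ) := by
        intro ν hν
        exact ihm ν (by omega)
      apply cancel _ _ (hrbar_ne k)
      calc rbar k * Ubar k
          = r * (uinf • (1 : Fin n → ℝ)) + Δt •
            ∑ ν ∈ Finset.univ.filter (fun ν => ν < k),
              (a k ν) • ((uinf / 2) • (g (tn + c ν * Δt) * rbar ν)) := by
            rw [hUbar k]
            congr 2
            apply Finset.sum_congr rfl
            intro ν hν
            rw [ih ν ((Finset.mem_filter.mp hν).2), hRHS]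
        _ = uinf • rbar k := by
            rw [reshape, hrbar k, smul_add, hr_uinf]
  have key : ∀ k : Fin s, Ubar k = uinf • (1 : Fin n → ℝ) :=
    fun k => key0 s k k.isLt
  refine ⟨key, ?_⟩
  apply cancel _ _ hrnew_ne
  calc rnew * Unew
      = r * (uinf • (1 : Fin n → ℝ)) + Δt •
        ∑ k : Fin s, b k • ((uinf / 2) • (g (tn + c k * Δt) * rbar k)) := by
        rw [hUnew]
        congr 2
        apply Finset.sum_congr rfl
        intro k _
        rw [key k, hRHS]
    _ = uinf • rnew := by
        rw [reshape, hrnew, smul_add, hr_uinf]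
end

section
/- Let n be a positive integer and let D₁, D₂ be n × n real matrices satisfying the consistency conditions D₁𝟙 = 0 and D₂𝟙 = 0 (𝟙 the all-ones vector) and the commutativity condition D₁D₂ = D₂D₁. Let X₁, X₂ : Fin n → ℝ and define the discrete Jacobian vector 𝒥 = (D₁X₁) ⊙ (D₂X₂) − (D₂X₁) ⊙ (D₁X₂) (componentwise products), and assume 𝒥 i ≠ 0 for every i. Define the physical-space operators D_{x₁} = (1/2) diag(𝒥)⁻¹ [ D₁ diag(D₂X₂) + diag(D₂X₂) D₁ − D₂ diag(D₁X₂) − diag(D₁X₂) D₂ ] and D_{x₂} = (1/2) diag(𝒥)⁻¹ [ D₂ diag(D₁X₁) + diag(D₁X₁) D₂ − D₁ diag(D₂X₁) − diag(D₂X₁) D₁ ]. Then D_{x₁} 𝟙 = 0 and D_{x₂} 𝟙 = 0. -/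
open Matrix

lemma diag_mulVec_one {n : ℕ} (v : Fin n → ℝ) :
    Matrix.diagonal v *ᵥ (1 : Fin n → ℝ) = v := by
  funext i
  simp [Matrix.mulVec_diagonal]

lemma key {n : ℕ} (A B : Matrix (Fin n) (Fin n) ℝ)
    (hA : A *ᵥ (1 : Fin n → ℝ) = 0) (hB : B *ᵥ (1 : Fin n → ℝ) = 0)
    (hcomm : A * B = B * A) (X : Fin n → ℝ) :
    (A * Matrix.diagonal (B *ᵥ X) + Matrix.diagonal (B *ᵥ X) * A
      - B * Matrix.diagonal (A *ᵥ X) - Matrix.diagonal (A *ᵥ X) * B) *ᵥ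
      (1 : Fin n → ℝ) = 0 := by
  have h1 : (A * Matrix.diagonal (B *ᵥ X)) *ᵥ (1 : Fin n → ℝ) = A *ᵥ (B *ᵥ X) := by
    rw [← Matrix.mulVec_mulVec, diag_mulVec_one]
  have h2 : (B * Matrix.diagonal (A *ᵥ X)) *ᵥ (1 : Fin n → ℝ) = B *ᵥ (A *ᵥ X) := by
    rw [← Matrix.mulVec_mulVec, diag_mulVec_one]
  have h3 : (Matrix.diagonal (B *ᵥ X) * A) *ᵥ (1 : Fin n → ℝ) = 0 := by
    rw [← Matrix.mulVec_mulVec, hA, Matrix.mulVec_zero]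
  have h4 : (Matrix.diagonal (A *ᵥ X) * B) *ᵥ (1 : Fin n → ℝ) = 0 := by
    rw [← Matrix.mulVec_mulVec, hB, Matrix.mulVec_zero]
  have h5 : A *ᵥ (B *ᵥ X) = B *ᵥ (A *ᵥ X) := by
    rw [Matrix.mulVec_mulVec, Matrix.mulVec_mulVec, hcomm]
  rw [Matrix.sub_mulVec, Matrix.sub_mulVec, Matrix.add_mulVec, h1, h2, h3, h4, h5]
  simp

/-- Appendix B.1 of the paper: if the reference-domain derivative operators `D₁, D₂`
are consistent (`Dᵢ𝟙 = 0`) and commute, then the physical-space SBP derivative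
operators built with the discretely computed metric terms and Jacobian
`𝒥 = (D₁X₁)⊙(D₂X₂) − (D₂X₁)⊙(D₁X₂)` annihilate constant vectors. -/
theorem stmt14 (n : ℕ) (hn : 0 < n)
    (D1 D2 : Matrix (Fin n) (Fin n) ℝ)
    (hD1 : D1 *ᵥ (1 : Fin n → ℝ) = 0) (hD2 : D2 *ᵥ (1 : Fin n → ℝ) = 0)
    (hcomm : D1 * D2 = D2 * D1)
    (X1 X2 : Fin n → ℝ)
    (J : Fin n → ℝ)
    (hJ : J = (D1 *ᵥ X1) * (D2 *ᵥ X2) - (D2 *ᵥ X1) * (D1 *ᵥ X2))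
    (hJne : ∀ i : Fin n, J i ≠ 0)
    (Dx1 Dx2 : Matrix (Fin n) (Fin n) ℝ)
    (hDx1 : Dx1 = (1 / 2 : ℝ) • ((Matrix.diagonal J)⁻¹ *
      (D1 * Matrix.diagonal (D2 *ᵥ X2) + Matrix.diagonal (D2 *ᵥ X2) * D1
        - D2 * Matrix.diagonal (D1 *ᵥ X2) - Matrix.diagonal (D1 *ᵥ X2) * D2)))
    (hDx2 : Dx2 = (1 / 2 : ℝ) • ((Matrix.diagonal J)⁻¹ *
      (D2 * Matrix.diagonal (D1 *ᵥ X1) + Matrix.diagonal (D1 *ᵥ X1) * D2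
        - D1 * Matrix.diagonal (D2 *ᵥ X1) - Matrix.diagonal (D2 *ᵥ X1) * D1))) :
    Dx1 *ᵥ (1 : Fin n → ℝ) = 0 ∧ Dx2 *ᵥ (1 : Fin n → ℝ) = 0 := by
  constructor
  · rw [hDx1, Matrix.smul_mulVec, ← Matrix.mulVec_mulVec,
      key D1 D2 hD1 hD2 hcomm X2, Matrix.mulVec_zero, smul_zero]
  · rw [hDx2, Matrix.smul_mulVec, ← Matrix.mulVec_mulVec,
      key D2 D1 hD2 hD1 hcomm.symm X1, Matrix.mulVec_zero, smul_zero]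
end

section
/- Let n ≥ 2, let 𝒫 : Fin n → ℝ be strictly positive quadrature weights, and let Q be an n × n real matrix satisfying the one-dimensional SBP property Q + Qᵀ = −e_sᵀ e_s + e_eᵀ e_e, where e_s and e_e are the row vectors selecting the first and last components. Set D_x = diag(𝒫)⁻¹ Q. Let ε > 0 and ẋ_s, ẋ_e ∈ ℝ. For any Φ ∈ ℝ^n, write Φ_s, Φ_e for its first and last components and Φ_{xs}, Φ_{xe} for the first and last components of D_xΦ, and define the discrete energy contribution 𝓔(Φ) = Φᵀ diag(𝒫)( ε D_x² − D_x )Φ + Φ_s( ε Φ_{xs} − (1 − ẋ_s) Φ_s ) + ( −ε Φ_{xe} + (1/2)(1 − ẋ_e) Φ_e ) Φ_e + (1/2)( ẋ_e Φ_e² − ẋ_s Φ_s² ). Then 𝓔(Φ) = −ε (D_xΦ)ᵀ diag(𝒫) (D_xΦ) − (1/2)(1 − ẋ_s) Φ_s² ; in particular, if ẋ_s ≤ 1 then 𝓔(Φ) ≤ 0 for every Φ ∈ ℝ^n. -/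
open Matrix

lemma dot_stdBasis {n : ℕ} (i j : Fin n) (c : ℝ) (Φ v : Fin n → ℝ) :
    Φ ⬝ᵥ (Matrix.single i j c *ᵥ v) = Φ i * (c * v j) := by
  simp [Matrix.single, Matrix.mulVec, dotProduct, ite_and,
    Finset.mul_sum, mul_comm, mul_left_comm]

/-- The discrete energy computation of Section 5 of the paper: for the 1-D SBP–SAT
discretization of advection–diffusion on a moving interval, the discrete energy
contribution `𝓔(Φ)` equals `−ε‖D_xΦ‖²_𝒫 − (1/2)(1 − ẋ_s)Φ_s²`; in particular, if
`ẋ_s ≤ 1` then `𝓔(Φ) ≤ 0` for every `Φ`. -/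
theorem stmt15 (n : ℕ) (hn : 2 ≤ n)
    (Pvol : Fin n → ℝ) (hPvol : ∀ i, 0 < Pvol i)
    (Q : Matrix (Fin n) (Fin n) ℝ)
    (hQ : Q + Qᵀ =
      Matrix.single (⟨n - 1, by omega⟩ : Fin n) (⟨n - 1, by omega⟩ : Fin n) 1
      - Matrix.single (⟨0, by omega⟩ : Fin n) (⟨0, by omega⟩ : Fin n) 1)
    (Dx : Matrix (Fin n) (Fin n) ℝ) (hDx : Dx = (Matrix.diagonal Pvol)⁻¹ * Q)
    (ε : ℝ) (hε : 0 < ε) (xds xde : ℝ)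
    (En : (Fin n → ℝ) → ℝ)
    (hEn : ∀ Φ : Fin n → ℝ, En Φ =
      Φ ⬝ᵥ (Matrix.diagonal Pvol *ᵥ ((ε • (Dx * Dx) - Dx) *ᵥ Φ))
      + Φ ⟨0, by omega⟩ *
          (ε * (Dx *ᵥ Φ) ⟨0, by omega⟩ - (1 - xds) * Φ ⟨0, by omega⟩)
      + (-(ε * (Dx *ᵥ Φ) ⟨n - 1, by omega⟩)
          + (1 / 2) * (1 - xde) * Φ ⟨n - 1, by omega⟩) * Φ ⟨n - 1, by omega⟩
      + (1 / 2) * (xde * Φ ⟨n - 1, by omega⟩ ^ 2 - xds * Φ ⟨0, by omega⟩ ^ 2)) :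
    ∀ Φ : Fin n → ℝ,
      En Φ = -(ε * ((Dx *ᵥ Φ) ⬝ᵥ (Matrix.diagonal Pvol *ᵥ (Dx *ᵥ Φ))))
          - (1 / 2) * (1 - xds) * Φ ⟨0, by omega⟩ ^ 2
      ∧ (xds ≤ 1 → En Φ ≤ 0) := by
  intro Φ
  set s : Fin n := ⟨0, by omega⟩ with hs
  set e : Fin n := ⟨n - 1, by omega⟩ with he
  set w : Fin n → ℝ := Dx *ᵥ Φ with hw
  have hdet : IsUnit (Matrix.diagonal Pvol).det := by
    rw [Matrix.det_diagonal]
    exact (Ne.isUnit (Finset.prod_pos (fun i _ => hPvol i)).ne')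
  have hPD : Matrix.diagonal Pvol * Dx = Q := by
    rw [hDx, ← mul_assoc, Matrix.mul_nonsing_inv _ hdet, one_mul]
  have hPv : ∀ v : Fin n → ℝ, Matrix.diagonal Pvol *ᵥ (Dx *ᵥ v) = Q *ᵥ v := by
    intro v; rw [Matrix.mulVec_mulVec, hPD]
  -- symmetry identity
  have hsym : ∀ v : Fin n → ℝ,
      Φ ⬝ᵥ (Q *ᵥ v) + v ⬝ᵥ (Q *ᵥ Φ) = Φ e * v e - Φ s * v s := by
    intro v
    have h1 : v ⬝ᵥ (Q *ᵥ Φ) = Φ ⬝ᵥ (Qᵀ *ᵥ v) := by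
      rw [Matrix.mulVec_transpose, Matrix.dotProduct_mulVec, dotProduct_comm]
    rw [h1, ← dotProduct_add, ← Matrix.add_mulVec, hQ, Matrix.sub_mulVec,
      dotProduct_sub, dot_stdBasis, dot_stdBasis]
    ring
  have hQw : Φ ⬝ᵥ (Q *ᵥ w) = Φ e * w e - Φ s * w s - w ⬝ᵥ (Matrix.diagonal Pvol *ᵥ w) := by
    have := hsym w
    rw [hw, hPv Φ] at *
    -- w ⬝ᵥ (Q *ᵥ Φ) = w ⬝ᵥ diag P w  since Q *ᵥ Φ = diag P *ᵥ w
    have h2 : (Dx *ᵥ Φ) ⬝ᵥ (Q *ᵥ Φ)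
        = (Dx *ᵥ Φ) ⬝ᵥ (Matrix.diagonal Pvol *ᵥ (Dx *ᵥ Φ)) := by rw [hPv Φ]
    linarith [hsym (Dx *ᵥ Φ)]
  have hQΦ : Φ ⬝ᵥ (Q *ᵥ Φ) = (1 / 2) * (Φ e ^ 2 - Φ s ^ 2) := by
    have := hsym Φ
    nlinarith [hsym Φ]
  -- main volume term
  have hvol : Φ ⬝ᵥ (Matrix.diagonal Pvol *ᵥ ((ε • (Dx * Dx) - Dx) *ᵥ Φ))
      = ε * (Φ ⬝ᵥ (Q *ᵥ w)) - Φ ⬝ᵥ (Q *ᵥ Φ) := by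
    rw [Matrix.sub_mulVec, Matrix.smul_mulVec, ← Matrix.mulVec_mulVec,
      Matrix.mulVec_sub, Matrix.mulVec_smul, ← hw, hPv w, hPv Φ,
      dotProduct_sub, dotProduct_smul, smul_eq_mul]
  have hquad : 0 ≤ w ⬝ᵥ (Matrix.diagonal Pvol *ᵥ w) := by
    apply Finset.sum_nonneg
    intro i _
    rw [Matrix.mulVec_diagonal]
    nlinarith [hPvol i, sq_nonneg (w i)]
  have key : En Φ = -(ε * (w ⬝ᵥ (Matrix.diagonal Pvol *ᵥ w)))
      - (1 / 2) * (1 - xds) * Φ s ^ 2 := by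
    rw [hEn Φ]
    rw [hvol, hQw, hQΦ, ← hw]
    ring
  refine ⟨key, fun hxds => ?_⟩
  rw [key]
  have : 0 ≤ (1 - xds) * Φ s ^ 2 := mul_nonneg (by linarith) (sq_nonneg _)
  nlinarith
end
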